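/- The polynomial x^9 − 6x^7 − 9x^6 − 2x^5 + 21x^4 + 35x^3 + 23x^2 + 7x + 1 is irreducible over ℚ and has exactly 3 real roots. -/
import Mathlib

open Polynomial

-- any monic irreducible poly over GF(2) of degree d divides X^(2^d) - X
lemma aux_dvd_pow_card (g : (ZMod 2)[X]) (hg : g.Monic) (hirr : Irreducible g) :
    g ∣ X ^ 2 ^ g.natDegree - X := by
  haveI : Fact (Irreducible g) := ⟨hirr⟩
  have hne : g ≠ 0 := hg.ne_zero
  let pb := AdjoinRoot.powerBasis hne
  haveI : Module.Finite (ZMod 2) (AdjoinRoot g) := Module.Finite.of_basis pb.basis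
  haveI : Finite (AdjoinRoot g) := Module.finite_of_finite (ZMod 2)
  haveI : Fintype (AdjoinRoot g) := Fintype.ofFinite _
  have hcard : Fintype.card (AdjoinRoot g) = 2 ^ g.natDegree := by
    rw [Module.card_fintype pb.basis]
    simp [pb, AdjoinRoot.powerBasis, ZMod.card]
  have hroot : (AdjoinRoot.root g) ^ (2 ^ g.natDegree) = AdjoinRoot.root g := by
    rw [← hcard]; exact FiniteField.pow_card _
  have haev : Polynomial.aeval (AdjoinRoot.root g)
      (X ^ 2 ^ g.natDegree - X : (ZMod 2)[X]) = 0 := by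
    simp [hroot]
  have hmin : minpoly (ZMod 2) (AdjoinRoot.root g) = g := by
    rw [AdjoinRoot.minpoly_root hne, hg.leadingCoeff]
    simp
  have hd := minpoly.dvd (ZMod 2) (AdjoinRoot.root g) haev
  rwa [hmin] at hd

lemma two_eq_zero_poly : (2 : (ZMod 2)[X]) = 0 := by
  rw [← map_ofNat (Polynomial.C : ZMod 2 →+* (ZMod 2)[X]) 2,
    show (2 : ZMod 2) = 0 from rfl, map_zero]

lemma f2_irreducible :
    Irreducible (X ^ 9 - 6 * X ^ 7 - 9 * X ^ 6 - 2 * X ^ 5 + 21 * X ^ 4 +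
      35 * X ^ 3 + 23 * X ^ 2 + 7 * X + 1 : (ZMod 2)[X]) := by
  set f : (ZMod 2)[X] := X ^ 9 - 6 * X ^ 7 - 9 * X ^ 6 - 2 * X ^ 5 + 21 * X ^ 4 +
      35 * X ^ 3 + 23 * X ^ 2 + 7 * X + 1 with hf
  have h2 := two_eq_zero_poly
  have hdeg : f.natDegree = 9 := by rw [hf]; compute_degree!
  have hfne : f ≠ 0 := fun h => by simpa [h] using hdeg
  -- coprimality certificates
  have hcop : ∀ d : ℕ, 1 ≤ d → d ≤ 4 → IsCoprime f (X ^ 2 ^ d - X : (ZMod 2)[X]) := by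
    intro d h1 h4
    interval_cases d
    · exact ⟨1, 1 + X ^ 2 + X ^ 5 + X ^ 6 + X ^ 7, by
        linear_combination (3 * X + 12 * X ^ 2 + 17 * X ^ 3 + 11 * X ^ 4 - 1 * X ^ 5
          - 5 * X ^ 6 - 3 * X ^ 7 + X ^ 9 : (ZMod 2)[X]) * h2⟩
    · exact ⟨1 + X + X ^ 3, X ^ 2 + X ^ 3 + X ^ 5 + X ^ 6 + X ^ 8, by
        linear_combination (4 * X + 15 * X ^ 2 + 29 * X ^ 3 + 31 * X ^ 4 + 21 * X ^ 5
          + 12 * X ^ 6 + 3 * X ^ 7 - 4 * X ^ 8 - 4 * X ^ 9 - 2 * X ^ 10 + X ^ 12 : (ZMod 2)[X]) * h2⟩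
    · exact ⟨1 + X + X ^ 6, X ^ 4 + X ^ 7, by
        linear_combination (4 * X + 15 * X ^ 2 + 29 * X ^ 3 + 28 * X ^ 4 + 9 * X ^ 5
          - 5 * X ^ 6 - 4 * X ^ 7 + 8 * X ^ 8 + 18 * X ^ 9 + 11 * X ^ 10 - 1 * X ^ 11
          - 4 * X ^ 12 - 3 * X ^ 13 + X ^ 15 : (ZMod 2)[X]) * h2⟩
    · exact ⟨1 + X + X ^ 2 + X ^ 8 + X ^ 9 + X ^ 10 + X ^ 12 + X ^ 13 + X ^ 15,
        X + X ^ 2 + X ^ 3 + X ^ 6 + X ^ 8, by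
        linear_combination (4 * X + 15 * X ^ 2 + 32 * X ^ 3 + 39 * X ^ 4 + 27 * X ^ 5
          + 5 * X ^ 6 - 9 * X ^ 7 - 7 * X ^ 8 + X ^ 9 + 16 * X ^ 10 + 33 * X ^ 11
          + 40 * X ^ 12 + 31 * X ^ 13 + 20 * X ^ 14 + 21 * X ^ 15 + 24 * X ^ 16
          + 19 * X ^ 17 + 13 * X ^ 18 + 4 * X ^ 19 - 4 * X ^ 20 - 4 * X ^ 21
          - 2 * X ^ 22 + X ^ 24 : (ZMod 2)[X]) * h2⟩
  -- no irreducible factor of degree ≤ 4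
  have hnofac : ∀ g : (ZMod 2)[X], g.Monic → Irreducible g → g ∣ f → ¬ g.natDegree ≤ 4 := by
    intro g hgm hgi hgd hle
    have hd1 : 1 ≤ g.natDegree := by
      rcases Nat.eq_zero_or_pos g.natDegree with h0 | h
      · exact absurd (hgm.natDegree_eq_zero.mp h0 ▸ isUnit_one) hgi.not_isUnit
      · exact h
    have hdvdX := aux_dvd_pow_card g hgm hgi
    exact hgi.not_isUnit ((hcop g.natDegree hd1 hle).isUnit_of_dvd' hgd hdvdX)
  constructor
  · intro hu
    have := natDegree_eq_zero_of_isUnit hu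
    omega
  · intro a b hab
    by_contra hcon
    push_neg at hcon
    obtain ⟨hua, hub⟩ := hcon
    have hane : a ≠ 0 := fun h => hfne (by rw [hab, h, zero_mul])
    have hbne : b ≠ 0 := fun h => hfne (by rw [hab, h, mul_zero])
    have hsum : a.natDegree + b.natDegree = 9 := by
      rw [← hdeg, hab, natDegree_mul hane hbne]
    have hda : 1 ≤ a.natDegree := by
      rcases Nat.eq_zero_or_pos a.natDegree with h0 | h
      · obtain ⟨c, hc⟩ := natDegree_eq_zero.mp h0
        exact absurd (hc ▸ isUnit_C.mpr (isUnit_iff_ne_zero.mpr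
          (fun hc0 => hane (by rw [← hc, hc0, C_0])))) hua
      · exact h
    have hdb : 1 ≤ b.natDegree := by
      rcases Nat.eq_zero_or_pos b.natDegree with h0 | h
      · obtain ⟨c, hc⟩ := natDegree_eq_zero.mp h0
        exact absurd (hc ▸ isUnit_C.mpr (isUnit_iff_ne_zero.mpr
          (fun hc0 => hbne (by rw [← hc, hc0, C_0])))) hub
      · exact h
    -- one of the two factors has degree ≤ 4
    have : ∃ c : (ZMod 2)[X], c ≠ 0 ∧ ¬ IsUnit c ∧ c ∣ f ∧ c.natDegree ≤ 4 := by
      rcases le_or_gt a.natDegree 4 with h | h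
      · exact ⟨a, hane, hua, ⟨b, hab⟩, h⟩
      · exact ⟨b, hbne, hub, ⟨a, by rw [hab, mul_comm]⟩, by omega⟩
    obtain ⟨c, hcne, hcu, hcdvd, hc4⟩ := this
    obtain ⟨g, hgm, hgi, hgdvd⟩ := Polynomial.exists_monic_irreducible_factor c hcu
    exact hnofac g hgm hgi (hgdvd.trans hcdvd)
      (le_trans (natDegree_le_of_dvd hgdvd hcne) hc4)

lemma fQ_irreducible :
    Irreducible (X ^ 9 - 6 * X ^ 7 - 9 * X ^ 6 - 2 * X ^ 5 + 21 * X ^ 4 +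
      35 * X ^ 3 + 23 * X ^ 2 + 7 * X + 1 : ℚ[X]) := by
  set pZ : ℤ[X] := X ^ 9 - 6 * X ^ 7 - 9 * X ^ 6 - 2 * X ^ 5 + 21 * X ^ 4 +
      35 * X ^ 3 + 23 * X ^ 2 + 7 * X + 1 with hpZ
  have hmonic : pZ.Monic := by
    unfold pZ; monicity!
  have hmap2 : pZ.map (Int.castRingHom (ZMod 2)) =
      (X ^ 9 - 6 * X ^ 7 - 9 * X ^ 6 - 2 * X ^ 5 + 21 * X ^ 4 +
      35 * X ^ 3 + 23 * X ^ 2 + 7 * X + 1 : (ZMod 2)[X]) := by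
    simp [hpZ, Polynomial.map_ofNat]
  have hirrZ : Irreducible pZ :=
    hmonic.irreducible_of_irreducible_map (Int.castRingHom (ZMod 2)) pZ
      (hmap2 ▸ f2_irreducible)
  have hmapQ : pZ.map (Int.castRingHom ℚ) =
      (X ^ 9 - 6 * X ^ 7 - 9 * X ^ 6 - 2 * X ^ 5 + 21 * X ^ 4 +
      35 * X ^ 3 + 23 * X ^ 2 + 7 * X + 1 : ℚ[X]) := by
    simp [hpZ, Polynomial.map_ofNat]
  exact hmapQ ▸ (Polynomial.IsPrimitive.Int.irreducible_iff_irreducible_map_cast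
    hmonic.isPrimitive).mp hirrZ

open Polynomial

noncomputable def pR : ℝ[X] := X ^ 9 - 6 * X ^ 7 - 9 * X ^ 6 - 2 * X ^ 5 + 21 * X ^ 4 +
      35 * X ^ 3 + 23 * X ^ 2 + 7 * X + 1

lemma heval : ∀ x : ℝ, pR.eval x = x ^ 9 - 6 * x ^ 7 - 9 * x ^ 6 - 2 * x ^ 5 + 21 * x ^ 4 +
      35 * x ^ 3 + 23 * x ^ 2 + 7 * x + 1 := by
  intro x; simp [pR]

lemma hderiv : pR.derivative = 9 * X ^ 8 - 42 * X ^ 6 - 54 * X ^ 5 - 10 * X ^ 4 +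
    84 * X ^ 3 + 105 * X ^ 2 + 46 * X + 7 := by
  unfold pR
  simp only [derivative_add, derivative_sub, derivative_mul, derivative_ofNat,
    derivative_X_pow, derivative_X, derivative_one, C_eq_natCast]
  push_cast
  ring

lemma hevald : ∀ x : ℝ, pR.derivative.eval x = 9 * x ^ 8 - 42 * x ^ 6 - 54 * x ^ 5 -
    10 * x ^ 4 + 84 * x ^ 3 + 105 * x ^ 2 + 46 * x + 7 := by
  intro x; rw [hderiv]; simp

-- (1) P' > 0 for x ≤ -3/2
lemma L1 (x : ℝ) (hx : x ≤ -(3/2)) :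
    0 < 9 * x ^ 8 - 42 * x ^ 6 - 54 * x ^ 5 - 10 * x ^ 4 + 84 * x ^ 3 + 105 * x ^ 2 + 46 * x + 7 := by
  have ht : (0:ℝ) ≤ -(3/2) - x := by linarith
  linarith [pow_nonneg ht 2, pow_nonneg ht 3, pow_nonneg ht 4, pow_nonneg ht 5,
    pow_nonneg ht 6, pow_nonneg ht 7, pow_nonneg ht 8, ht]

-- (5) P' > 0 for x ≥ 13/5
lemma L5 (x : ℝ) (hx : (13/5 : ℝ) ≤ x) :
    0 < 9 * x ^ 8 - 42 * x ^ 6 - 54 * x ^ 5 - 10 * x ^ 4 + 84 * x ^ 3 + 105 * x ^ 2 + 46 * x + 7 := by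
  have ht : (0:ℝ) ≤ x - 13/5 := by linarith
  linarith [pow_nonneg ht 2, pow_nonneg ht 3, pow_nonneg ht 4, pow_nonneg ht 5,
    pow_nonneg ht 6, pow_nonneg ht 7, pow_nonneg ht 8, ht]

-- (3) P' < 0 on [8/5, 2]
lemma L3 (x : ℝ) (h1 : (8/5 : ℝ) ≤ x) (h2 : x ≤ 2) :
    9 * x ^ 8 - 42 * x ^ 6 - 54 * x ^ 5 - 10 * x ^ 4 + 84 * x ^ 3 + 105 * x ^ 2 + 46 * x + 7 < 0 := by
  have ht : (0:ℝ) ≤ x - 8/5 := by linarith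
  have hs : (0:ℝ) ≤ 2 - x := by linarith
  linarith [mul_nonneg (pow_nonneg ht 1) (pow_nonneg hs 7),
    mul_nonneg (pow_nonneg ht 2) (pow_nonneg hs 6),
    mul_nonneg (pow_nonneg ht 3) (pow_nonneg hs 5),
    mul_nonneg (pow_nonneg ht 4) (pow_nonneg hs 4),
    mul_nonneg (pow_nonneg ht 5) (pow_nonneg hs 3),
    mul_nonneg (pow_nonneg ht 6) (pow_nonneg hs 2),
    mul_nonneg (pow_nonneg ht 7) (pow_nonneg hs 1),
    pow_nonneg ht 8, pow_nonneg hs 8]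

-- (4) P < 0 on [2, 13/5]
lemma L4 (x : ℝ) (h1 : (2:ℝ) ≤ x) (h2 : x ≤ 13/5) :
    x ^ 9 - 6 * x ^ 7 - 9 * x ^ 6 - 2 * x ^ 5 + 21 * x ^ 4 +
      35 * x ^ 3 + 23 * x ^ 2 + 7 * x + 1 < 0 := by
  have ht : (0:ℝ) ≤ x - 2 := by linarith
  have hs : (0:ℝ) ≤ 13/5 - x := by linarith
  linarith [mul_nonneg (pow_nonneg ht 1) (pow_nonneg hs 8),
    mul_nonneg (pow_nonneg ht 2) (pow_nonneg hs 7),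
    mul_nonneg (pow_nonneg ht 3) (pow_nonneg hs 6),
    mul_nonneg (pow_nonneg ht 4) (pow_nonneg hs 5),
    mul_nonneg (pow_nonneg ht 5) (pow_nonneg hs 4),
    mul_nonneg (pow_nonneg ht 6) (pow_nonneg hs 3),
    mul_nonneg (pow_nonneg ht 7) (pow_nonneg hs 2),
    mul_nonneg (pow_nonneg ht 8) (pow_nonneg hs 1),
    pow_nonneg ht 9, pow_nonneg hs 9]

-- (2) P > 0 on [-3/2, 8/5]
lemma L2 (x : ℝ) (h1 : -(3/2:ℝ) ≤ x) (h2 : x ≤ 8/5) :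
    0 < x ^ 9 - 6 * x ^ 7 - 9 * x ^ 6 - 2 * x ^ 5 + 21 * x ^ 4 +
      35 * x ^ 3 + 23 * x ^ 2 + 7 * x + 1 := by
  rcases le_or_gt x (-(29/40)) with hc | hc
  · have ht : (0:ℝ) ≤ x - (-(3/2)) := by linarith
    have hs : (0:ℝ) ≤ (-(29/40)) - x := by linarith
    linarith [mul_nonneg (pow_nonneg ht 1) (pow_nonneg hs 8),
      mul_nonneg (pow_nonneg ht 2) (pow_nonneg hs 7),
      mul_nonneg (pow_nonneg ht 3) (pow_nonneg hs 6),
      mul_nonneg (pow_nonneg ht 4) (pow_nonneg hs 5),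
      mul_nonneg (pow_nonneg ht 5) (pow_nonneg hs 4),
      mul_nonneg (pow_nonneg ht 6) (pow_nonneg hs 3),
      mul_nonneg (pow_nonneg ht 7) (pow_nonneg hs 2),
      mul_nonneg (pow_nonneg ht 8) (pow_nonneg hs 1),
      pow_nonneg ht 9, pow_nonneg hs 9]
  rcases le_or_gt x (1/20) with hd | hd
  · have ht : (0:ℝ) ≤ x - (-(29/40)) := by linarith
    have hs : (0:ℝ) ≤ 1/20 - x := by linarith
    linarith [mul_nonneg (pow_nonneg ht 1) (pow_nonneg hs 8),
      mul_nonneg (pow_nonneg ht 2) (pow_nonneg hs 7),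
      mul_nonneg (pow_nonneg ht 3) (pow_nonneg hs 6),
      mul_nonneg (pow_nonneg ht 4) (pow_nonneg hs 5),
      mul_nonneg (pow_nonneg ht 5) (pow_nonneg hs 4),
      mul_nonneg (pow_nonneg ht 6) (pow_nonneg hs 3),
      mul_nonneg (pow_nonneg ht 7) (pow_nonneg hs 2),
      mul_nonneg (pow_nonneg ht 8) (pow_nonneg hs 1),
      pow_nonneg ht 9, pow_nonneg hs 9]
  · have ht : (0:ℝ) ≤ x - 1/20 := by linarith
    have hs : (0:ℝ) ≤ 8/5 - x := by linarith
    linarith [mul_nonneg (pow_nonneg ht 1) (pow_nonneg hs 8),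
      mul_nonneg (pow_nonneg ht 2) (pow_nonneg hs 7),
      mul_nonneg (pow_nonneg ht 3) (pow_nonneg hs 6),
      mul_nonneg (pow_nonneg ht 4) (pow_nonneg hs 5),
      mul_nonneg (pow_nonneg ht 5) (pow_nonneg hs 4),
      mul_nonneg (pow_nonneg ht 6) (pow_nonneg hs 3),
      mul_nonneg (pow_nonneg ht 7) (pow_nonneg hs 2),
      mul_nonneg (pow_nonneg ht 8) (pow_nonneg hs 1),
      pow_nonneg ht 9, pow_nonneg hs 9]

lemma pR_ne_zero : pR ≠ 0 := fun h => by
  have := heval 0; rw [h] at this; norm_num at this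

lemma hmono1 : StrictMonoOn (fun x => pR.eval x) (Set.Iic (-(3/2 : ℝ))) := by
  apply strictMonoOn_of_deriv_pos (convex_Iic _) (pR.continuous.continuousOn)
  intro x hx
  rw [interior_Iic] at hx
  rw [Polynomial.deriv, hevald]
  exact L1 x hx.le

lemma hmono3 : StrictMonoOn (fun x => pR.eval x) (Set.Ici ((13/5 : ℝ))) := by
  apply strictMonoOn_of_deriv_pos (convex_Ici _) (pR.continuous.continuousOn)
  intro x hx
  rw [interior_Ici] at hx
  rw [Polynomial.deriv, hevald]
  exact L5 x hx.le

lemma hanti : StrictAntiOn (fun x => pR.eval x) (Set.Icc (8/5 : ℝ) 2) := by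
  apply strictAntiOn_of_deriv_neg (convex_Icc _ _) (pR.continuous.continuousOn)
  intro x hx
  rw [interior_Icc] at hx
  rw [Polynomial.deriv, hevald]
  exact L3 x hx.1.le hx.2.le

lemma card_le : pR.roots.toFinset.card ≤ 3 := by
  classical
  have h012 : (3 : ℕ) = ({0, 1, 2} : Finset ℕ).card := by decide
  rw [h012]
  apply Finset.card_le_card_of_injOn
    (fun x => if x ≤ -(3/2) then (0 : ℕ) else if x ≤ 13/5 then 1 else 2)
  · intro a _
    dsimp only
    split_ifs <;> decide
  · intro a ha b hb hab
    rw [Finset.mem_coe, Multiset.mem_toFinset, Polynomial.mem_roots pR_ne_zero] at ha hb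
    have ha0 : pR.eval a = 0 := ha
    have hb0 : pR.eval b = 0 := hb
    -- localization of middle roots
    have hmid : ∀ x : ℝ, pR.eval x = 0 → ¬ x ≤ -(3/2) → x ≤ 13/5 →
        x ∈ Set.Icc (8/5 : ℝ) 2 := by
      intro x hx hxl hxr
      rw [heval] at hx
      push_neg at hxl
      constructor
      · by_contra h
        push_neg at h
        have := L2 x hxl.le h.le
        linarith
      · by_contra h
        push_neg at h
        have := L4 x h.le hxr
        linarith
    dsimp only at hab
    split_ifs at hab with h1 h2 h3 h4 h5 h6 <;> try omega
    · exact hmono1.injOn h1 h2 (by rw [ha0, hb0])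
    · exact hanti.injOn (hmid a ha0 h1 h4) (hmid b hb0 h5 h6) (by rw [ha0, hb0])
    · have hb' : ¬ b ≤ (13/5 : ℝ) := by assumption
      exact hmono3.injOn (Set.mem_Ici.mpr (le_of_not_ge h4))
        (Set.mem_Ici.mpr (le_of_not_ge hb')) (by rw [ha0, hb0])

lemma card_eq : pR.roots.toFinset.card = 3 := by
  classical
  refine le_antisymm card_le ?_
  have hcont : ∀ a b : ℝ, ContinuousOn (fun x => pR.eval x) (Set.Icc a b) :=
    fun a b => pR.continuous.continuousOn
  have h01 : (0:ℝ) ∈ Set.Ioo (pR.eval (-17/10)) (pR.eval (-(3/2))) := by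
    rw [Set.mem_Ioo, heval, heval]; norm_num
  obtain ⟨r1, hr1m, hr1⟩ := intermediate_value_Ioo
    (by norm_num : (-17/10 : ℝ) ≤ -(3/2)) (hcont _ _) h01
  have h02 : (0:ℝ) ∈ Set.Ioo (pR.eval 2) (pR.eval (8/5)) := by
    rw [Set.mem_Ioo, heval, heval]; norm_num
  obtain ⟨r2, hr2m, hr2⟩ := intermediate_value_Ioo'
    (by norm_num : (8/5 : ℝ) ≤ 2) (hcont _ _) h02
  have h03 : (0:ℝ) ∈ Set.Ioo (pR.eval (13/5)) (pR.eval 3) := by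
    rw [Set.mem_Ioo, heval, heval]; norm_num
  obtain ⟨r3, hr3m, hr3⟩ := intermediate_value_Ioo
    (by norm_num : (13/5 : ℝ) ≤ 3) (hcont _ _) h03
  obtain ⟨hr1a, hr1b⟩ := hr1m
  obtain ⟨hr2a, hr2b⟩ := hr2m
  obtain ⟨hr3a, hr3b⟩ := hr3m
  have hsub : ({r1, r2, r3} : Finset ℝ) ⊆ pR.roots.toFinset := by
    intro x hx
    rw [Multiset.mem_toFinset, Polynomial.mem_roots pR_ne_zero]
    simp only [Finset.mem_insert, Finset.mem_singleton] at hx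
    rcases hx with rfl | rfl | rfl
    · exact hr1
    · exact hr2
    · exact hr3
  have hcard3 : ({r1, r2, r3} : Finset ℝ).card = 3 := by
    rw [Finset.card_eq_three]
    refine ⟨r1, r2, r3, ?_, ?_, ?_, rfl⟩
    · exact ne_of_lt (by linarith)
    · exact ne_of_lt (by linarith)
    · exact ne_of_lt (by linarith)
  calc (3:ℕ) = ({r1, r2, r3} : Finset ℝ).card := hcard3.symm
    _ ≤ _ := Finset.card_le_card hsub

theorem poly2_irreducible_three_real_roots :
    Irreducible (X ^ 9 - 6 * X ^ 7 - 9 * X ^ 6 - 2 * X ^ 5 + 21 * X ^ 4 +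
      35 * X ^ 3 + 23 * X ^ 2 + 7 * X + 1 : ℚ[X]) ∧
    ((X ^ 9 - 6 * X ^ 7 - 9 * X ^ 6 - 2 * X ^ 5 + 21 * X ^ 4 +
      35 * X ^ 3 + 23 * X ^ 2 + 7 * X + 1 : ℚ[X]).map
        (algebraMap ℚ ℝ)).roots.toFinset.card = 3 := by
  constructor
  · exact fQ_irreducible
  · have hmap : ((X ^ 9 - 6 * X ^ 7 - 9 * X ^ 6 - 2 * X ^ 5 + 21 * X ^ 4 +
        35 * X ^ 3 + 23 * X ^ 2 + 7 * X + 1 : ℚ[X]).map (algebraMap ℚ ℝ)) = pR := by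
      simp [pR, Polynomial.map_ofNat]
    rw [hmap]
    exact card_eq
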